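/- Let Ω = (−1, 2) ⊂ ℝ and define g : ℝ × ℝ → ℝ by g(x, z) := (1 + z) if x ≤ z and 0 otherwise. Consider the solution set G := { g(·, z)|_Ω : z ∈ [0, 1] } as a subset of L²(Ω). Then the Kolmogorov m-width of G decays no faster than m^{−1/2}: there exists a constant C > 0 such that for every m ≥ 1 and every subspace V ⊆ L²(Ω) with dim V ≤ m, sup_{z ∈ [0,1]} dist_{L²(Ω)}( g(·, z)|_Ω, V ) ≥ C·m^{−1/2}. -/

import Mathlib

open MeasureTheory
open scoped RealInnerProductSpace

lemma abstract_width {E : Type*} [NormedAddCommGroup E] [InnerProductSpace ℝ E]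
    [CompleteSpace E]
    (V : Submodule ℝ E) [FiniteDimensional ℝ V] {m N : ℕ}
    (hm : Module.finrank ℝ V ≤ m)
    (f : Fin N → E) {δ : ℝ} (hδ : 0 < δ)
    (hnorm : ∀ i, ‖f i‖ = δ)
    (horth : ∀ i j, i ≠ j → ⟪f i, f j⟫ = 0)
    {S : ℝ} (hS0 : 0 ≤ S)
    (hS : ∀ i, ‖f i - (V.orthogonalProjectionOnto (f i) : E)‖ ≤ S) :
    δ ^ 2 * ((N : ℝ) - m) ≤ (N : ℝ) * S ^ 2 := by
  classical
  -- orthonormal family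
  set e : Fin N → E := fun i => δ⁻¹ • f i with he
  have hBesselFamily : Orthonormal ℝ e := by
    rw [orthonormal_iff_ite]
    intro i j
    by_cases h : i = j
    · subst h
      simp only [he, inner_smul_left, inner_smul_right, RCLike.conj_to_real, if_true]
      rw [real_inner_self_eq_norm_sq, hnorm i]
      field_simp
    · simp only [he, inner_smul_left, inner_smul_right, RCLike.conj_to_real, if_neg h,
        horth i j h, mul_zero]
  -- Bessel bound per basis vector
  have key : ∀ x : E, ‖x‖ = 1 → ∑ i : Fin N, ⟪(x : E), f i⟫ ^ 2 ≤ δ ^ 2 := by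
    intro x hx
    have hb := hBesselFamily.sum_inner_products_le (s := Finset.univ) x
    rw [hx, one_pow] at hb
    have heq : ∀ i : Fin N, ‖⟪e i, x⟫‖ ^ 2 = δ⁻¹ ^ 2 * ⟪x, f i⟫ ^ 2 := by
      intro i
      rw [he]
      simp only [inner_smul_left, RCLike.conj_to_real, Real.norm_eq_abs, sq_abs]
      rw [real_inner_comm]
      ring
    rw [Finset.sum_congr rfl fun i _ => heq i, ← Finset.mul_sum] at hb
    have hδ2 : (0:ℝ) < δ⁻¹ ^ 2 := by positivity
    calc ∑ i : Fin N, ⟪x, f i⟫ ^ 2 = δ ^ 2 * (δ⁻¹ ^ 2 * ∑ i : Fin N, ⟪x, f i⟫ ^ 2) := by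
          field_simp
      _ ≤ δ ^ 2 * 1 := by
          apply mul_le_mul_of_nonneg_left hb (by positivity)
      _ = δ ^ 2 := by ring
  -- Parseval on V
  set d := Module.finrank ℝ V with hd
  set b := stdOrthonormalBasis ℝ V with hbdef
  have hPnorm : ∀ y : E, ‖(V.orthogonalProjectionOnto y : E)‖ ^ 2
      = ∑ j : Fin d, ⟪((b j : V) : E), y⟫ ^ 2 := by
    intro y
    have h1 : ‖(V.orthogonalProjectionOnto y : E)‖ = ‖V.orthogonalProjectionOnto y‖ := rfl
    rw [h1, ← b.repr.norm_map (V.orthogonalProjectionOnto y)]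
    rw [EuclideanSpace.norm_eq, Real.sq_sqrt (by positivity)]
    refine Finset.sum_congr rfl fun j _ => ?_
    rw [b.repr_apply_apply, Submodule.inner_orthogonalProjectionOnto_eq_of_mem_left, Real.norm_eq_abs, sq_abs]
  have hsumP : ∑ i : Fin N, ‖(V.orthogonalProjectionOnto (f i) : E)‖ ^ 2 ≤ (m : ℝ) * δ ^ 2 := by
    calc ∑ i : Fin N, ‖(V.orthogonalProjectionOnto (f i) : E)‖ ^ 2
        = ∑ i : Fin N, ∑ j : Fin d, ⟪((b j : V) : E), f i⟫ ^ 2 := by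
          exact Finset.sum_congr rfl fun i _ => hPnorm (f i)
      _ = ∑ j : Fin d, ∑ i : Fin N, ⟪((b j : V) : E), f i⟫ ^ 2 := Finset.sum_comm
      _ ≤ ∑ _j : Fin d, δ ^ 2 := by
          refine Finset.sum_le_sum fun j _ => key _ ?_
          have := b.orthonormal.1 j
          exact this
      _ = (d : ℝ) * δ ^ 2 := by simp [Finset.sum_const]
      _ ≤ (m : ℝ) * δ ^ 2 := by
          apply mul_le_mul_of_nonneg_right _ (by positivity)
          exact_mod_cast hm
  -- Pythagoras
  have hpyth : ∀ i, ‖f i - (V.orthogonalProjectionOnto (f i) : E)‖ ^ 2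
      = δ ^ 2 - ‖(V.orthogonalProjectionOnto (f i) : E)‖ ^ 2 := by
    intro i
    have h0 := Submodule.norm_sq_eq_add_norm_sq_projection (f i) V
    have h2 : ((Vᗮ.orthogonalProjectionOnto) (f i) : E) = f i - V.orthogonalProjectionOnto (f i) :=
      Submodule.starProjection_orthogonal_val _
    have h3 : ‖(Vᗮ.orthogonalProjectionOnto) (f i)‖ = ‖f i - ((V.orthogonalProjectionOnto) (f i) : E)‖ := by
      rw [← h2]; rfl
    have h4 : ‖(V.orthogonalProjectionOnto) (f i)‖ = ‖((V.orthogonalProjectionOnto) (f i) : E)‖ := rfl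
    rw [h3, h4, hnorm i] at h0
    linarith
  -- combine
  have hsum1 : ∑ i : Fin N, ‖f i - ((V.orthogonalProjectionOnto) (f i) : E)‖ ^ 2 ≤ (N : ℝ) * S ^ 2 := by
    calc ∑ i : Fin N, ‖f i - ((V.orthogonalProjectionOnto) (f i) : E)‖ ^ 2
        ≤ ∑ _i : Fin N, S ^ 2 :=
          Finset.sum_le_sum fun i _ => pow_le_pow_left₀ (norm_nonneg _) (hS i) 2
      _ = (N : ℝ) * S ^ 2 := by simp [Finset.sum_const]
  have hsum2 : δ ^ 2 * ((N : ℝ) - m)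
      ≤ ∑ i : Fin N, ‖f i - ((V.orthogonalProjectionOnto) (f i) : E)‖ ^ 2 := by
    rw [Finset.sum_congr rfl fun i _ => hpyth i, Finset.sum_sub_distrib]
    have : ∑ _i : Fin N, δ ^ 2 = (N : ℝ) * δ ^ 2 := by simp [Finset.sum_const]
    rw [this]
    nlinarith [hsumP]
  linarith

set_option maxHeartbeats 1000000 in
theorem step_functions_mwidth_lower_bound
    (g : ℝ → ℝ → ℝ)
    (hg : ∀ x z : ℝ, g x z = if x ≤ z then 1 + z else 0)
    (μ : Measure ℝ) (hμ : μ = volume.restrict (Set.Ioo (-1 : ℝ) 2))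
    (U : ℝ → Lp ℝ 2 μ)
    (hU : ∀ z ∈ Set.Icc (0 : ℝ) 1, U z =ᵐ[μ] fun x => g x z) :
    ∃ C > (0 : ℝ), ∀ m : ℕ, 1 ≤ m →
      ∀ V : Submodule ℝ (Lp ℝ 2 μ), Module.rank ℝ ↥V ≤ m →
        C / Real.sqrt m
          ≤ ⨆ z : Set.Icc (0 : ℝ) 1,
              Metric.infDist (U z) (V : Set (Lp ℝ 2 μ)) := by
  classical
  refine ⟨1/4, by norm_num, ?_⟩
  intro m hm V hV
  haveI : FiniteDimensional ℝ V :=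
    (Module.rank_lt_aleph0_iff (R := ℝ) (M := V)).mp (hV.trans_lt (Cardinal.nat_lt_aleph0 m))
  have hfr : Module.finrank ℝ V ≤ m := by
    have := Module.rank_lt_aleph0 ℝ (↥V)
    rwa [← Module.finrank_eq_rank, Nat.cast_le] at hV
  set N := 2 * m with hNdef
  have hNpos : 0 < N := by omega
  have hNR : (0:ℝ) < N := by exact_mod_cast hNpos
  -- grid points
  set A : Fin N → ℝ := fun k => (k : ℝ) / N with hA
  set B : Fin N → ℝ := fun k => ((k : ℝ) + 1) / N with hB
  have hA01 : ∀ k, A k ∈ Set.Icc (0:ℝ) 1 := by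
    intro k
    constructor
    · positivity
    · rw [hA, div_le_one hNR]
      have : (k : ℕ) < N := k.2
      exact_mod_cast this.le
  have hB01 : ∀ k, B k ∈ Set.Icc (0:ℝ) 1 := by
    intro k
    constructor
    · positivity
    · rw [hB, div_le_one hNR]
      have : (k : ℕ) + 1 ≤ N := k.2
      exact_mod_cast this
  have hAB : ∀ k, A k < B k := by
    intro k
    rw [hA, hB, div_lt_div_iff₀ hNR hNR]
    nlinarith [Nat.cast_nonneg (α := ℝ) (k : ℕ)]
  -- the subintervals
  set s : Fin N → Set ℝ := fun k => Set.Ioc (A k) (B k) with hs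
  have hμs : ∀ k, μ (s k) = ENNReal.ofReal (1 / N) := by
    intro k
    rw [hμ, Measure.restrict_apply measurableSet_Ioc]
    have hsub : s k ⊆ Set.Ioo (-1:ℝ) 2 := by
      intro x hx
      rcases hx with ⟨h1, h2⟩
      constructor
      · have := (hA01 k).1; linarith
      · have := (hB01 k).2; linarith
    rw [Set.inter_eq_self_of_subset_left hsub, Real.volume_Ioc]
    congr 1
    rw [hA, hB]
    field_simp
    ring
  have hμsfin : ∀ k, μ (s k) ≠ ⊤ := fun k => by rw [hμs k]; exact ENNReal.ofReal_ne_top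
  -- the orthogonal family
  set f : Fin N → Lp ℝ 2 μ := fun k => indicatorConstLp 2 measurableSet_Ioc (hμsfin k) (1:ℝ) with hf
  set δ : ℝ := Real.sqrt (1 / N) with hδdef
  have hδpos : 0 < δ := Real.sqrt_pos.mpr (by positivity)
  have hδ2 : δ ^ 2 = 1 / N := Real.sq_sqrt (by positivity)
  have hnorm : ∀ k, ‖f k‖ = δ := by
    intro k
    rw [hf]
    rw [norm_indicatorConstLp two_ne_zero ENNReal.ofNat_ne_top]
    rw [measureReal_def, hμs k, ENNReal.toReal_ofReal (by positivity)]
    rw [hδdef, Real.sqrt_eq_rpow]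
    norm_num
  have hdisj : ∀ i j : Fin N, i ≠ j → Disjoint (s i) (s j) := by
    intro i j hij
    rw [hs]
    rw [Set.Ioc_disjoint_Ioc]
    rcases lt_or_gt_of_ne hij with h | h
    · have hij' : (i : ℕ) + 1 ≤ (j : ℕ) := h
      have h1 : B i ≤ A j := by
        rw [hA, hB, div_le_div_iff₀ hNR hNR]
        have : ((i : ℕ) : ℝ) + 1 ≤ ((j : ℕ) : ℝ) := by exact_mod_cast hij'
        nlinarith
      exact le_trans (min_le_left _ _) (le_trans h1 (le_max_right _ _))
    · have hij' : (j : ℕ) + 1 ≤ (i : ℕ) := h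
      have h1 : B j ≤ A i := by
        rw [hA, hB, div_le_div_iff₀ hNR hNR]
        have : ((j : ℕ) : ℝ) + 1 ≤ ((i : ℕ) : ℝ) := by exact_mod_cast hij'
        nlinarith
      exact le_trans (min_le_right _ _) (le_trans h1 (le_max_left _ _))
  have horth : ∀ i j : Fin N, i ≠ j → ⟪f i, f j⟫ = 0 := by
    intro i j hij
    rw [MeasureTheory.L2.inner_def]
    have h1 := indicatorConstLp_coeFn (p := 2) (μ := μ)
      (hs := (measurableSet_Ioc : MeasurableSet (s i))) (hμs := hμsfin i) (c := (1:ℝ))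
    have h2 := indicatorConstLp_coeFn (p := 2) (μ := μ)
      (hs := (measurableSet_Ioc : MeasurableSet (s j))) (hμs := hμsfin j) (c := (1:ℝ))
    have hae : (fun x => ⟪f i x, f j x⟫) =ᵐ[μ] (fun _ => (0:ℝ)) := by
      filter_upwards [h1, h2] with x hx1 hx2
      have hfi : f i x = (s i).indicator (fun _ => (1:ℝ)) x := hx1
      have hfj : f j x = (s j).indicator (fun _ => (1:ℝ)) x := hx2
      simp only [RCLike.inner_apply, conj_trivial, hfi, hfj]
      by_cases hxi : x ∈ s i
      · have : x ∉ s j := Set.disjoint_left.mp (hdisj i j hij) hxi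
        rw [Set.indicator_of_notMem this, zero_mul]
      · rw [Set.indicator_of_notMem hxi, mul_zero]
    rw [integral_congr_ae hae, integral_zero]
  -- identification with differences of scaled U
  set w : ℝ → Lp ℝ 2 μ := fun t => (1 + t)⁻¹ • U t with hw
  have hfw : ∀ k : Fin N, f k = w (B k) - w (A k) := by
    intro k
    apply Lp.ext
    have h0 := indicatorConstLp_coeFn (p := 2) (μ := μ)
      (hs := (measurableSet_Ioc : MeasurableSet (s k))) (hμs := hμsfin k) (c := (1:ℝ))
    have hsub := Lp.coeFn_sub (w (B k)) (w (A k))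
    have hsmB := Lp.coeFn_smul ((1 + B k)⁻¹) (U (B k))
    have hsmA := Lp.coeFn_smul ((1 + A k)⁻¹) (U (A k))
    have hUB := hU (B k) (hB01 k)
    have hUA := hU (A k) (hA01 k)
    filter_upwards [h0, hsub, hsmB, hsmA, hUB, hUA] with x hx0 hxsub hxB hxA hxUB hxUA
    rw [hx0, hxsub]
    simp only [Pi.sub_apply]
    rw [hxB, hxA]
    simp only [Pi.smul_apply, smul_eq_mul]
    rw [hxUB, hxUA, hg, hg]
    have h1B : (0:ℝ) < 1 + B k := by have := (hB01 k).1; linarith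
    have h1A : (0:ℝ) < 1 + A k := by have := (hA01 k).1; linarith
    have hABk := hAB k
    by_cases hxA' : x ≤ A k
    · have hxB' : x ≤ B k := le_trans hxA' hABk.le
      rw [if_pos hxB', if_pos hxA']
      rw [Set.indicator_of_notMem (by simp [hs, Set.mem_Ioc]; intro h; linarith)]
      field_simp
      ring
    · by_cases hxB' : x ≤ B k
      · rw [if_pos hxB', if_neg hxA']
        rw [Set.indicator_of_mem (by simp [hs, Set.mem_Ioc]; exact ⟨lt_of_not_ge hxA', hxB'⟩)]
        field_simp
        ring
      · rw [if_neg hxB', if_neg hxA']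
        rw [Set.indicator_of_notMem (by simp [hs, Set.mem_Ioc]; intro h; linarith [lt_of_not_ge hxB'])]
        ring
  -- uniform norm bound on U z
  have hUnorm : ∀ z ∈ Set.Icc (0:ℝ) 1, ‖U z‖ ≤ 4 := by
    intro z hz
    rw [Lp.norm_def, eLpNorm_congr_ae (hU z hz)]
    have hbd : ∀ᵐ x ∂μ, ‖g x z‖ ≤ 2 := by
      filter_upwards with x
      rw [hg]
      split_ifs
      · rw [Real.norm_eq_abs, abs_of_nonneg (by linarith [hz.1])]; linarith [hz.2]
      · simp
    have hle := eLpNorm_le_of_ae_bound (p := 2) (μ := μ) hbd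
    have hμuniv : μ Set.univ = ENNReal.ofReal 3 := by
      rw [hμ, Measure.restrict_apply_univ, Real.volume_Ioo]
      norm_num
    rw [hμuniv] at hle
    have hRHS : (ENNReal.ofReal 3 ^ (2:ENNReal).toReal⁻¹ * ENNReal.ofReal 2).toReal ≤ 4 := by
      rw [ENNReal.toReal_mul, ← ENNReal.toReal_rpow, ENNReal.toReal_ofReal (by norm_num),
        ENNReal.toReal_ofReal (by norm_num)]
      have h2 : (2:ENNReal).toReal⁻¹ = (1/2 : ℝ) := by norm_num
      rw [h2, ← Real.sqrt_eq_rpow]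
      have h3 : Real.sqrt 3 ≤ 2 := by
        rw [show (2:ℝ) = Real.sqrt 4 by
          rw [show (4:ℝ) = 2^2 by norm_num, Real.sqrt_sq (by norm_num : (0:ℝ) ≤ 2)]]
        exact Real.sqrt_le_sqrt (by norm_num)
      linarith
    refine le_trans ?_ hRHS
    apply ENNReal.toReal_mono ?_ hle
    apply ENNReal.mul_ne_top ?_ ENNReal.ofReal_ne_top
    exact ENNReal.rpow_ne_top_of_nonneg (by norm_num) ENNReal.ofReal_ne_top
  -- the sup S
  have hVne : (V : Set (Lp ℝ 2 μ)).Nonempty := ⟨0, V.zero_mem⟩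
  have hbdd : BddAbove (Set.range fun z : Set.Icc (0:ℝ) 1 =>
      Metric.infDist (U z) (V : Set (Lp ℝ 2 μ))) := by
    refine ⟨4, ?_⟩
    rintro _ ⟨z, rfl⟩
    refine le_trans (Metric.infDist_le_dist_of_mem V.zero_mem) ?_
    rw [dist_zero_right]
    exact hUnorm z z.2
  set S := ⨆ z : Set.Icc (0:ℝ) 1, Metric.infDist (U z) (V : Set (Lp ℝ 2 μ)) with hSdef
  have hzS : ∀ z (hz : z ∈ Set.Icc (0:ℝ) 1),
      Metric.infDist (U z) (V : Set (Lp ℝ 2 μ)) ≤ S := fun z hz => le_ciSup hbdd ⟨z, hz⟩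
  have hS0 : 0 ≤ S :=
    le_trans Metric.infDist_nonneg (hzS 0 (by norm_num))
  -- distance of w z to its projection is at most S
  haveI : Nonempty V := ⟨0⟩
  have hwS : ∀ z ∈ Set.Icc (0:ℝ) 1,
      ‖w z - (V.orthogonalProjectionOnto (w z) : Lp ℝ 2 μ)‖ ≤ S := by
    intro z hz
    refine le_trans ?_ (hzS z hz)
    rw [Metric.infDist_eq_iInf]
    refine le_ciInf fun v => ?_
    have h1z : (0:ℝ) < 1 + z := by linarith [hz.1]
    have hmem : (1 + z)⁻¹ • (v : Lp ℝ 2 μ) ∈ V := V.smul_mem _ v.2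
    have h2 : ‖w z - (V.orthogonalProjectionOnto (w z) : Lp ℝ 2 μ)‖
        ≤ ‖w z - (1 + z)⁻¹ • (v : Lp ℝ 2 μ)‖ := by
      rw [← Submodule.starProjection_apply, Submodule.starProjection_minimal]
      exact ciInf_le ⟨0, by rintro y ⟨u, rfl⟩; positivity⟩ (⟨_, hmem⟩ : V)
    refine h2.trans ?_
    have h3 : w z - (1 + z)⁻¹ • (v : Lp ℝ 2 μ) = (1 + z)⁻¹ • (U z - v) := by
      rw [hw, smul_sub]
    rw [h3, norm_smul, dist_eq_norm, Real.norm_eq_abs, abs_of_pos (by positivity)]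
    have h4 : (1 + z)⁻¹ ≤ 1 := by
      rw [inv_le_one_iff₀]; right; linarith [hz.1]
    nlinarith [norm_nonneg (U z - (v : Lp ℝ 2 μ))]
  -- distance of f k to its projection is at most 2S
  have hfS : ∀ k : Fin N,
      ‖f k - (V.orthogonalProjectionOnto (f k) : Lp ℝ 2 μ)‖ ≤ 2 * S := by
    intro k
    rw [hfw k]
    have heq : w (B k) - w (A k)
          - (V.orthogonalProjectionOnto (w (B k) - w (A k)) : Lp ℝ 2 μ)
        = (w (B k) - (V.orthogonalProjectionOnto (w (B k)) : Lp ℝ 2 μ))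
          - (w (A k) - (V.orthogonalProjectionOnto (w (A k)) : Lp ℝ 2 μ)) := by
      rw [map_sub, Submodule.coe_sub]
      abel
    rw [heq]
    refine le_trans (norm_sub_le _ _) ?_
    have := hwS (B k) (hB01 k)
    have := hwS (A k) (hA01 k)
    linarith
  -- apply the abstract width lemma
  have habs := abstract_width V hfr f hδpos hnorm horth
    (S := 2 * S) (by linarith) hfS
  rw [hδ2] at habs
  have hNm : (N:ℝ) = 2 * m := by rw [hNdef]; push_cast; ring
  have hmR : (1:ℝ) ≤ m := by exact_mod_cast hm
  have hS2 : 1 / (16 * (m:ℝ)) ≤ S ^ 2 := by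
    rw [hNm] at habs
    have hmpos : (0:ℝ) < m := by linarith
    have e1 : 1/(2*(m:ℝ)) * (2*(m:ℝ) - (m:ℝ)) = 1/2 := by field_simp; ring
    rw [e1] at habs
    rw [div_le_iff₀ (by positivity)]
    nlinarith [habs, hmpos]
  have hsqm : (0:ℝ) < Real.sqrt m := Real.sqrt_pos.mpr (by linarith)
  have hgoal : (1/4 / Real.sqrt m) ^ 2 = 1 / (16 * (m:ℝ)) := by
    rw [div_pow, Real.sq_sqrt (by linarith)]
    ring
  calc (1:ℝ)/4 / Real.sqrt m
      = Real.sqrt ((1/4 / Real.sqrt m) ^ 2) := (Real.sqrt_sq (by positivity)).symm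
    _ ≤ Real.sqrt (S ^ 2) := Real.sqrt_le_sqrt (by rw [hgoal]; exact hS2)
    _ = S := Real.sqrt_sq hS0
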